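/- Let T>0, α∈(1/3,1/2], let (B,𝔹) be an α-Hölder rough path on [0,T] with values in ℝ^r, let ψ:[0,T]→ℝ^r be continuous with ‖ψ‖_∞ := sup_u|ψ_u| < ∞, set Φ_t := ∫_0^t ψ_u du, Y := Φ + B, and 𝕐_{s,t} := 𝔹_{s,t} + ∫_s^t (Φ_{s,v} + B_{s,v})⊗ψ_v dv + Φ_{s,t}⊗B_{s,t} − ∫_s^t ψ_v⊗B_{s,v} dv. Let (Z,Z′) be controlled by B, with Z:[0,T]→L(ℝ^r,ℝ^d) and Z′:[0,T]→L(ℝ^r,L(ℝ^r,ℝ^d)). Then: (i) (Z,Z′) is also controlled by Y, i.e. ‖(s,t) ↦ Z_{s,t} − Z′_s Y_{s,t}‖_{2α,[0,T]} < ∞; (ii) the compensated Riemann sums Σ_k (Z_{t_k} B_{t_k,t_{k+1}} + Z′_{t_k} 𝔹_{t_k,t_{k+1}}) and Σ_k (Z_{t_k} Y_{t_k,t_{k+1}} + Z′_{t_k} 𝕐_{t_k,t_{k+1}}), over partitions 0 = t_0 < ⋯ < t_n = T, converge as the mesh tends to 0, to limits denoted ∫_0^T Z_s dB_s and ∫_0^T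 Z_s dY_s respectively; and (iii) ∫_0^T Z_s dY_s = ∫_0^T Z_s ψ_s ds + ∫_0^T Z_s dB_s. -/

import Mathlib

open scoped BigOperators
open MeasureTheory

noncomputable section

def pairSet {E : Type*} [NormedAddCommGroup E] (β a b : ℝ) (F : ℝ → ℝ → E) : Set ℝ :=
  {x | ∃ s t : ℝ, s ∈ Set.Icc a b ∧ t ∈ Set.Icc a b ∧ x = ‖F s t‖ / |t - s| ^ β}

noncomputable def pSup {E : Type*} [NormedAddCommGroup E] (β a b : ℝ) (F : ℝ → ℝ → E) : ℝ :=
  sSup (pairSet β a b F)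

def incr {E : Type*} [NormedAddCommGroup E] (Z : ℝ → E) : ℝ → ℝ → E := fun s t => Z t - Z s

def tens {r : ℕ} (x y : EuclideanSpace ℝ (Fin r)) : EuclideanSpace ℝ (Fin r × Fin r) :=
  (WithLp.equiv 2 _).symm (fun p => x p.1 * y p.2)

def bapp {r d : ℕ}
    (L : EuclideanSpace ℝ (Fin r) →L[ℝ] EuclideanSpace ℝ (Fin r) →L[ℝ] EuclideanSpace ℝ (Fin d))
    (M : EuclideanSpace ℝ (Fin r × Fin r)) : EuclideanSpace ℝ (Fin d) :=
  ∑ p : Fin r × Fin r, M p • L (EuclideanSpace.single p.1 1) (EuclideanSpace.single p.2 1)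

def Chen {r : ℕ} (T : ℝ) (B : ℝ → EuclideanSpace ℝ (Fin r))
    (𝔹 : ℝ → ℝ → EuclideanSpace ℝ (Fin r × Fin r)) : Prop :=
  ∀ s ∈ Set.Icc 0 T, ∀ u ∈ Set.Icc 0 T, ∀ t ∈ Set.Icc 0 T,
    𝔹 s t - 𝔹 s u - 𝔹 u t = tens (B u - B s) (B t - B u)

def RSConv {E : Type*} [NormedAddCommGroup E] (a b : ℝ) (F : ℝ → ℝ → E) (I : E) : Prop :=
  ∀ η > (0:ℝ), ∃ δ > (0:ℝ), ∀ (n : ℕ) (π : ℕ → ℝ),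
    π 0 = a → π n = b → (∀ k < n, π k < π (k + 1)) →
    (∀ k < n, π (k + 1) - π k < δ) →
    ‖(∑ k ∈ Finset.range n, F (π k) (π (k + 1))) - I‖ < η

/-- `Φ_t = ∫₀ᵗ ψ_u du`. -/
def Phi {r : ℕ} (ψ : ℝ → EuclideanSpace ℝ (Fin r)) : ℝ → EuclideanSpace ℝ (Fin r) :=
  fun t => ∫ u in (0:ℝ)..t, ψ u

/-- The enhanced process `𝕐` of `Y = Φ + B`. -/
def YY {r : ℕ} (𝔹 : ℝ → ℝ → EuclideanSpace ℝ (Fin r × Fin r))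
    (ψ B : ℝ → EuclideanSpace ℝ (Fin r)) : ℝ → ℝ → EuclideanSpace ℝ (Fin r × Fin r) :=
  fun s t => 𝔹 s t
    + (∫ v in s..t, tens ((Phi ψ v - Phi ψ s) + (B v - B s)) (ψ v))
    + tens (Phi ψ t - Phi ψ s) (B t - B s)
    - ∫ v in s..t, tens (ψ v) (B v - B s)


section Sewing
variable {E : Type*} [NormedAddCommGroup E]

lemma part_mono {π : ℕ → ℝ} {n : ℕ} (hπ : ∀ k < n, π k < π (k+1)) :
    ∀ {k l : ℕ}, k ≤ l → l ≤ n → π k ≤ π l := by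
  intro k l hkl hln
  induction l with
  | zero => simp [Nat.le_zero.mp hkl]
  | succ m ih =>
    rcases Nat.lt_or_ge k (m+1) with h | h
    · exact le_trans (ih (Nat.lt_succ_iff.mp h) (le_trans (Nat.le_succ m) hln))
        (le_of_lt (hπ m (Nat.lt_of_succ_le hln)))
    · have : k = m+1 := le_antisymm hkl h
      simp [this]

variable {a b C θ : ℝ} {Ξ : ℝ → ℝ → E}

lemma diag_zero (hθ0 : 0 < θ)
    (Hδ : ∀ s u t : ℝ, a ≤ s → s ≤ u → u ≤ t → t ≤ b → ‖Ξ s t - Ξ s u - Ξ u t‖ ≤ C * (t-s) ^ θ)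
    {x : ℝ} (hx : a ≤ x) (hxb : x ≤ b) : Ξ x x = 0 := by
  have h := Hδ x x x hx le_rfl le_rfl hxb
  have e1 : Ξ x x - Ξ x x - Ξ x x = -(Ξ x x) := by abel
  rw [e1, norm_neg, sub_self, Real.zero_rpow (ne_of_gt hθ0), mul_zero] at h
  simpa using le_antisymm h (norm_nonneg _)

lemma removal (hC : 0 ≤ C) (hθ0 : 0 < θ)
    (Hδ : ∀ s u t : ℝ, a ≤ s → s ≤ u → u ≤ t → t ≤ b → ‖Ξ s t - Ξ s u - Ξ u t‖ ≤ C * (t-s) ^ θ) :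
    ∀ n : ℕ, ∀ π : ℕ → ℝ, (∀ k < n, π k < π (k+1)) → a ≤ π 0 → π n ≤ b →
    ‖(∑ k ∈ Finset.range n, Ξ (π k) (π (k+1))) - Ξ (π 0) (π n)‖
      ≤ C * (2*(π n - π 0)) ^ θ * ∑ j ∈ Finset.range (n-1), (((j:ℝ)+1)⁻¹) ^ θ := by
  intro n
  induction n using Nat.strong_induction_on with
  | _ n IH =>
  intro π hπ ha hb
  have hmono : ∀ {k l : ℕ}, k ≤ l → l ≤ n → π k ≤ π l := fun h h' => part_mono hπ h h'
  have hL0 : 0 ≤ π n - π 0 := sub_nonneg.mpr (hmono (Nat.zero_le n) le_rfl)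
  have hRnn : 0 ≤ C * (2*(π n - π 0)) ^ θ * ∑ j ∈ Finset.range (n-1), (((j:ℝ)+1)⁻¹) ^ θ := by
    apply mul_nonneg (mul_nonneg hC (Real.rpow_nonneg (by linarith) _))
    exact Finset.sum_nonneg fun j _ => Real.rpow_nonneg (by positivity) _
  rcases Nat.lt_or_ge n 2 with h2 | h2
  · interval_cases n
    · simp only [Finset.range_zero, Finset.sum_empty, zero_sub, norm_neg]
      rw [diag_zero hθ0 Hδ ha hb]
      simpa using hRnn
    · simp only [Finset.range_one, Finset.sum_singleton, sub_self, norm_zero]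
      exact hRnn
  · set L := π n - π 0 with hLdef
    -- find minimizing interior point
    obtain ⟨i, hiS, himin⟩ := Finset.exists_min_image (Finset.Ico 1 n)
      (fun i => π (i+1) - π (i-1)) ⟨1, by simp [Nat.lt_of_lt_of_le one_lt_two h2]⟩
    have hi1 : 1 ≤ i := (Finset.mem_Ico.mp hiS).1
    have hin : i < n := (Finset.mem_Ico.mp hiS).2
    -- the sum of gaps is ≤ 2L
    have hsum : ∑ j ∈ Finset.Ico 1 n, (π (j+1) - π (j-1)) ≤ 2 * L := by
      have e : ∀ j ∈ Finset.Ico 1 n, π (j+1) - π (j-1) = (π (j+1) - π j) + (π j - π (j-1)) := by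
        intro j hj; ring
      rw [Finset.sum_congr rfl e, Finset.sum_add_distrib]
      have t1 : ∑ j ∈ Finset.Ico 1 n, (π (j+1) - π j) = π n - π 1 := by
        have : ∑ j ∈ Finset.Ico 0 n, (π (j+1) - π j) = π n - π 0 := by
          rw [← Finset.range_eq_Ico]; exact Finset.sum_range_sub π n
        have hsplit := Finset.sum_eq_sum_Ico_succ_bot (Nat.lt_of_lt_of_le Nat.zero_lt_two h2)
          (fun j => π (j+1) - π j)
        rw [hsplit] at this; linarith
      have t2 : ∑ j ∈ Finset.Ico 1 n, (π j - π (j-1)) = π (n-1) - π 0 := by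
        rw [Finset.sum_Ico_eq_sum_range]
        have : ∀ k ∈ Finset.range (n-1), π (1+k) - π (1+k-1) = π (k+1) - π k := by
          intro k _; congr 1 <;> congr 1 <;> omega
        rw [Finset.sum_congr rfl this, Finset.sum_range_sub π (n-1)]
      rw [t1, t2]
      have e1 : π 0 ≤ π 1 := hmono (by omega) (by omega)
      have e2 : π (n-1) ≤ π n := hmono (by omega) le_rfl
      simp only [hLdef]; linarith
    have hcard : (Finset.Ico 1 n).card = n - 1 := by simp
    have hmin : ((n:ℝ) - 1) * (π (i+1) - π (i-1)) ≤ 2 * L := by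
      have := Finset.card_nsmul_le_sum (Finset.Ico 1 n) (fun j => π (j+1) - π (j-1))
        (π (i+1) - π (i-1)) (fun j hj => himin j hj)
      rw [hcard, nsmul_eq_mul] at this
      have hc : ((n - 1 : ℕ) : ℝ) = (n:ℝ) - 1 := by
        have : (1:ℕ) ≤ n := by omega
        push_cast [this]; ring
      rw [hc] at this; linarith
    have hgap : π (i+1) - π (i-1) ≤ 2 * L / ((n:ℝ) - 1) := by
      have hn1 : (0:ℝ) < (n:ℝ) - 1 := by
        have : (2:ℝ) ≤ (n:ℝ) := by exact_mod_cast h2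
        linarith
      rw [div_eq_mul_inv, ← mul_comm]
      calc π (i+1) - π (i-1) = ((n:ℝ)-1)⁻¹ * (((n:ℝ)-1) * (π (i+1) - π (i-1))) := by
            field_simp
        _ ≤ ((n:ℝ)-1)⁻¹ * (2*L) := by
            apply mul_le_mul_of_nonneg_left hmin (by positivity)
    set π' : ℕ → ℝ := fun k => if k < i then π k else π (k+1) with hπ'
    set f : ℕ → E := fun k => Ξ (π k) (π (k+1)) with hf
    set f' : ℕ → E := fun k => Ξ (π' k) (π' (k+1)) with hf'
    have hπ'0 : π' 0 = π 0 := by simp [hπ', Nat.lt_of_lt_of_le Nat.zero_lt_one hi1]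
    have hπ'n : π' (n-1) = π n := by
      have h1 : ¬ (n-1 < i) := by omega
      simp only [hπ', h1, if_false]; congr 1; omega
    have hπ'strict : ∀ k < n-1, π' k < π' (k+1) := by
      intro k hk
      rcases Nat.lt_or_ge (k+1) i with h | h
      · simp only [hπ', Nat.lt_of_succ_lt h, h, if_true]; exact hπ k (by omega)
      · rcases Nat.lt_or_ge k i with h' | h'
        · have hki : k + 1 = i := by omega
          simp only [hπ', h', if_true, if_neg (by omega : ¬ (k+1 < i))]
          calc π k < π (k+1) := hπ k (by omega)
            _ < π (k+1+1) := hπ (k+1) (by omega)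
        · simp only [hπ', if_neg (by omega : ¬ (k < i)), if_neg (by omega : ¬ (k+1 < i))]
          exact hπ (k+1) (by omega)
    have e0 : i - 1 + 1 = i := by omega
    have hsn : (∑ k ∈ Finset.range n, f k)
        = (∑ k ∈ Finset.Ico 0 (i-1), f k) + f (i-1) + f i + ∑ k ∈ Finset.Ico (i+1) n, f k := by
      have s1 : ∑ k ∈ Finset.Ico 0 (i-1), f k + ∑ k ∈ Finset.Ico (i-1) n, f k
          = ∑ k ∈ Finset.Ico 0 n, f k := Finset.sum_Ico_consecutive f (by omega) (by omega)
      have s2 : ∑ k ∈ Finset.Ico (i-1) n, f k = f (i-1) + ∑ k ∈ Finset.Ico i n, f k := by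
        rw [Finset.sum_eq_sum_Ico_succ_bot (by omega : i-1 < n) f, e0]
      have s3 : ∑ k ∈ Finset.Ico i n, f k = f i + ∑ k ∈ Finset.Ico (i+1) n, f k :=
        Finset.sum_eq_sum_Ico_succ_bot (by omega) f
      rw [Finset.range_eq_Ico, ← s1, s2, s3]; abel
    have hsn' : (∑ k ∈ Finset.range (n-1), f' k)
        = (∑ k ∈ Finset.Ico 0 (i-1), f k) + Ξ (π (i-1)) (π (i+1)) + ∑ k ∈ Finset.Ico (i+1) n, f k := by
      have s1 : ∑ k ∈ Finset.Ico 0 (i-1), f' k + ∑ k ∈ Finset.Ico (i-1) (n-1), f' k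
          = ∑ k ∈ Finset.Ico 0 (n-1), f' k := Finset.sum_Ico_consecutive f' (by omega) (by omega)
      have s2 : ∑ k ∈ Finset.Ico (i-1) (n-1), f' k = f' (i-1) + ∑ k ∈ Finset.Ico i (n-1), f' k := by
        rw [Finset.sum_eq_sum_Ico_succ_bot (by omega : i-1 < n-1) f', e0]
      have c1 : ∑ k ∈ Finset.Ico 0 (i-1), f' k = ∑ k ∈ Finset.Ico 0 (i-1), f k := by
        apply Finset.sum_congr rfl
        intro k hk
        have hk' : k < i - 1 := (Finset.mem_Ico.mp hk).2
        simp only [hf', hf, hπ', if_pos (by omega : k < i), if_pos (by omega : k + 1 < i)]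
      have c2 : f' (i-1) = Ξ (π (i-1)) (π (i+1)) := by
        simp only [hf', hπ', e0, if_pos (by omega : i - 1 < i), if_neg (lt_irrefl i)]
      have c3 : ∑ k ∈ Finset.Ico i (n-1), f' k = ∑ k ∈ Finset.Ico (i+1) n, f k := by
        rw [Finset.sum_Ico_eq_sum_range, Finset.sum_Ico_eq_sum_range]
        have hcard : n - 1 - i = n - (i+1) := by omega
        rw [hcard]
        apply Finset.sum_congr rfl
        intro k _
        simp only [hf', hf, hπ', if_neg (by omega : ¬ (i + k < i)), if_neg (by omega : ¬ (i + k + 1 < i))]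
        congr 2 <;> omega
      rw [Finset.range_eq_Ico, ← s1, s2, c1, c2, c3]; abel
    -- the removal識 identity
    have hkey : (∑ k ∈ Finset.range n, f k) - Ξ (π 0) (π n)
        = ((∑ k ∈ Finset.range (n-1), f' k) - Ξ (π 0) (π n))
          - (Ξ (π (i-1)) (π (i+1)) - Ξ (π (i-1)) (π i) - Ξ (π i) (π (i+1))) := by
      rw [hsn, hsn']; simp only [hf, e0]; abel
    -- bound the removed term
    have hmemk : ∀ k, k ≤ n → a ≤ π k ∧ π k ≤ b := fun k hk =>
      ⟨le_trans ha (hmono (Nat.zero_le k) hk), le_trans (hmono hk le_rfl) hb⟩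
    have hn1pos : (0:ℝ) < (n:ℝ) - 1 := by
      have : (2:ℝ) ≤ (n:ℝ) := by exact_mod_cast h2
      linarith
    have hD : ‖Ξ (π (i-1)) (π (i+1)) - Ξ (π (i-1)) (π i) - Ξ (π i) (π (i+1))‖
        ≤ C * (2*L) ^ θ * (((n:ℝ)-1)⁻¹) ^ θ := by
      have h1 := Hδ (π (i-1)) (π i) (π (i+1)) (hmemk (i-1) (by omega)).1
        (hmono (by omega) (by omega)) (hmono (by omega) (by omega)) (hmemk (i+1) (by omega)).2
      refine h1.trans ?_
      have hnn : 0 ≤ π (i+1) - π (i-1) := sub_nonneg.mpr (hmono (by omega) (by omega))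
      have : (π (i+1) - π (i-1)) ^ θ ≤ (2*L/((n:ℝ)-1)) ^ θ :=
        Real.rpow_le_rpow hnn hgap hθ0.le
      have e : (2*L/((n:ℝ)-1)) ^ θ = (2*L) ^ θ * (((n:ℝ)-1)⁻¹) ^ θ := by
        rw [div_eq_mul_inv, Real.mul_rpow (by linarith) (by positivity)]
      rw [mul_assoc]
      exact mul_le_mul_of_nonneg_left (by rw [← e]; exact this) hC
    have hIH' := IH (n-1) (by omega) π' hπ'strict (by rw [hπ'0]; exact ha) (by rw [hπ'n]; exact hb)
    rw [hπ'0, hπ'n] at hIH'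
    have hsum_split : (∑ j ∈ Finset.range (n-1), (((j:ℝ)+1)⁻¹) ^ θ)
        = (∑ j ∈ Finset.range (n-1-1), (((j:ℝ)+1)⁻¹) ^ θ) + (((n:ℝ)-1)⁻¹) ^ θ := by
      have e2 : n - 1 - 1 = n - 2 := by omega
      have e1 : n - 1 = (n - 2) + 1 := by omega
      rw [e2, e1, Finset.sum_range_succ]
      have e3 : ((n-2:ℕ):ℝ) + 1 = (n:ℝ) - 1 := by
        have : ((n-2:ℕ):ℝ) = (n:ℝ) - 2 := by
          push_cast [Nat.cast_sub h2]; ring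
        rw [this]; ring
      rw [e3]
    calc ‖(∑ k ∈ Finset.range n, f k) - Ξ (π 0) (π n)‖
        ≤ ‖(∑ k ∈ Finset.range (n-1), f' k) - Ξ (π 0) (π n)‖
          + ‖Ξ (π (i-1)) (π (i+1)) - Ξ (π (i-1)) (π i) - Ξ (π i) (π (i+1))‖ := by
          rw [hkey]; exact norm_sub_le _ _
      _ ≤ C * (2*L) ^ θ * (∑ j ∈ Finset.range (n-1-1), (((j:ℝ)+1)⁻¹) ^ θ)
          + C * (2*L) ^ θ * (((n:ℝ)-1)⁻¹) ^ θ := add_le_add hIH' hD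
      _ = C * (2*L) ^ θ * ∑ j ∈ Finset.range (n-1), (((j:ℝ)+1)⁻¹) ^ θ := by
          rw [hsum_split]; ring



lemma sumK_le (hθ : 1 < θ) (m : ℕ) :
    (∑ j ∈ Finset.range m, (((j:ℝ)+1)⁻¹) ^ θ) ≤ ∑' j : ℕ, (((j:ℝ)+1)⁻¹) ^ θ := by
  have hs : Summable (fun j : ℕ => (((j:ℝ)+1)⁻¹) ^ θ) := by
    have base : Summable (fun n : ℕ => ((n:ℝ) ^ θ)⁻¹) := Real.summable_nat_rpow_inv.mpr hθ
    have : Summable (fun j : ℕ => ((((j+1:ℕ)):ℝ) ^ θ)⁻¹) :=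
      (summable_nat_add_iff (f := fun n : ℕ => ((n:ℝ) ^ θ)⁻¹) 1).mpr base
    apply this.congr
    intro j
    rw [Real.inv_rpow (by positivity)]
    push_cast
    ring_nf
  exact Summable.sum_le_tsum _ (fun j _ => Real.rpow_nonneg (by positivity) _) hs

lemma removal' (hC : 0 ≤ C) (hθ : 1 < θ)
    (Hδ : ∀ s u t : ℝ, a ≤ s → s ≤ u → u ≤ t → t ≤ b → ‖Ξ s t - Ξ s u - Ξ u t‖ ≤ C * (t-s) ^ θ)
    (n : ℕ) (π : ℕ → ℝ) (h1 : ∀ k < n, π k < π (k+1)) (h2 : a ≤ π 0) (h3 : π n ≤ b) :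
    ‖(∑ k ∈ Finset.range n, Ξ (π k) (π (k+1))) - Ξ (π 0) (π n)‖
      ≤ C * (∑' j : ℕ, (((j:ℝ)+1)⁻¹) ^ θ) * (2*(π n - π 0)) ^ θ := by
  refine (removal hC (lt_trans one_pos hθ) Hδ n π h1 h2 h3).trans ?_
  have hL0 : 0 ≤ π n - π 0 := sub_nonneg.mpr (part_mono h1 (Nat.zero_le n) le_rfl)
  have := sumK_le (θ := θ) hθ (n-1)
  calc C * (2*(π n - π 0)) ^ θ * ∑ j ∈ Finset.range (n-1), (((j:ℝ)+1)⁻¹) ^ θ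
      ≤ C * (2*(π n - π 0)) ^ θ * ∑' j : ℕ, (((j:ℝ)+1)⁻¹) ^ θ := by
        apply mul_le_mul_of_nonneg_left this
        exact mul_nonneg hC (Real.rpow_nonneg (by linarith) _)
    _ = C * (∑' j : ℕ, (((j:ℝ)+1)⁻¹) ^ θ) * (2*(π n - π 0)) ^ θ := by ring

noncomputable def Kθ (θ : ℝ) : ℝ := ∑' j : ℕ, (((j:ℝ)+1)⁻¹) ^ θ

lemma Kθ_nonneg (θ : ℝ) : 0 ≤ Kθ θ :=
  tsum_nonneg fun j => Real.rpow_nonneg (by positivity) _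

lemma compare_uniform (hab : a < b) (hC : 0 ≤ C) (hθ : 1 < θ)
    (Hδ : ∀ s u t : ℝ, a ≤ s → s ≤ u → u ≤ t → t ≤ b → ‖Ξ s t - Ξ s u - Ξ u t‖ ≤ C * (t-s) ^ θ)
    (m : ℕ) (hm : 1 ≤ m)
    (n : ℕ) (π : ℕ → ℝ) (hπ0 : π 0 = a) (hπn : π n = b)
    (hstr : ∀ k < n, π k < π (k+1)) (hmesh : ∀ k < n, π (k+1) - π k ≤ (b-a)/m) :
    ‖(∑ k ∈ Finset.range n, Ξ (π k) (π (k+1)))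
      - ∑ j ∈ Finset.range m, Ξ (a + j*((b-a)/m)) (a + ((j:ℝ)+1)*((b-a)/m))‖
      ≤ C * (Kθ θ + 2) * m * (4*((b-a)/m)) ^ θ := by
  classical
  set h : ℝ := (b-a)/m with hh_def
  have hm0 : (0:ℝ) < m := by exact_mod_cast hm
  have hh : 0 < h := div_pos (by linarith) hm0
  set u : ℕ → ℝ := fun j => a + j*h with hu_def
  have hu0 : u 0 = a := by simp [hu_def]
  have hum : u m = b := by
    simp only [hu_def, hh_def]
    field_simp
    ring
  have humono : ∀ {j j' : ℕ}, j ≤ j' → u j ≤ u j' := by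
    intro j j' hj
    simp only [hu_def]
    have : (j:ℝ) ≤ (j':ℝ) := by exact_mod_cast hj
    nlinarith
  have hustep : ∀ j : ℕ, u (j+1) = u j + h := by
    intro j; simp only [hu_def]; push_cast; ring
  have hmono : ∀ {k l : ℕ}, k ≤ l → l ≤ n → π k ≤ π l := fun hkl hln => part_mono hstr hkl hln
  have hn1 : 1 ≤ n := by
    rcases Nat.eq_zero_or_pos n with h0 | h0
    · exfalso; rw [h0] at hπn; rw [hπ0] at hπn; linarith [hπn ▸ hab]
    · exact h0
  have hπmem : ∀ k, k ≤ n → a ≤ π k ∧ π k ≤ b := by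
    intro k hk
    constructor
    · rw [← hπ0]; exact hmono (Nat.zero_le k) hk
    · rw [← hπn]; exact hmono hk le_rfl
  set kk : ℕ → ℕ := fun j => Nat.findGreatest (fun k => π k ≤ u j) n with hkk_def
  have hua : ∀ j : ℕ, a ≤ u j := by
    intro j; simp only [hu_def]
    have : (0:ℝ) ≤ (j:ℝ) := Nat.cast_nonneg j
    nlinarith
  have hku_le : ∀ j : ℕ, π (kk j) ≤ u j := by
    intro j
    simp only [hkk_def]
    exact Nat.findGreatest_spec (P := fun k => π k ≤ u j) (Nat.zero_le n)
      (show π 0 ≤ u j by rw [hπ0]; exact hua j)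
  have hkk_le_n : ∀ j, kk j ≤ n := by
    intro j
    simp only [hkk_def]
    exact Nat.findGreatest_le n
  have hkk0 : kk 0 = 0 := by
    by_contra hne
    have h1 : 1 ≤ kk 0 := Nat.one_le_iff_ne_zero.mpr hne
    have := hku_le 0
    rw [hu0] at this
    have h2 : π 0 < π (kk 0) := lt_of_lt_of_le (hstr 0 hn1) (hmono h1 (hkk_le_n 0))
    rw [hπ0] at h2; linarith
  have hkkm : kk m = n := by
    refine le_antisymm (hkk_le_n m) ?_
    simp only [hkk_def]
    exact Nat.le_findGreatest (P := fun k => π k ≤ u m) le_rfl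
      (show π n ≤ u m by rw [hum, hπn])
  have hkk_mono : ∀ {j j' : ℕ}, j ≤ j' → kk j ≤ kk j' := by
    intro j j' hj
    have h1 : π (kk j) ≤ u j' := le_trans (hku_le j) (humono hj)
    conv_rhs => rw [hkk_def]
    exact Nat.le_findGreatest (P := fun k => π k ≤ u j') (hkk_le_n j) h1
  have hujb : ∀ j < m, u j < b := by
    intro j hj
    rw [← hum]
    simp only [hu_def]
    have : (j:ℝ) < (m:ℝ) := by exact_mod_cast hj
    nlinarith
  have hsucc : ∀ j, j < m → kk j + 1 ≤ n ∧ π (kk j + 1) ≤ u (j+1) ∧ u j < π (kk j + 1) := by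
    intro j hj
    have hlt : kk j < n := by
      rcases Nat.lt_or_ge (kk j) n with h' | h'
      · exact h'
      · exfalso
        have heq : kk j = n := le_antisymm (hkk_le_n j) h'
        have h1 := hku_le j
        rw [heq, hπn] at h1
        exact absurd h1 (not_le.mpr (hujb j hj))
    refine ⟨hlt, ?_, ?_⟩
    · have := hmesh (kk j) hlt
      have := hku_le j
      rw [hustep j]
      simp only [← hh_def] at *
      linarith
    · have h2 : Nat.findGreatest (fun k => π k ≤ u j) n < kk j + 1 :=
        Nat.lt_succ_self _
      have h3 := Nat.findGreatest_is_greatest (P := fun k => π k ≤ u j) h2 hlt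
      exact lt_of_not_ge h3
  have hkk_strict : ∀ j < m, kk j + 1 ≤ kk (j+1) := by
    intro j hj
    conv_rhs => rw [hkk_def]
    exact Nat.le_findGreatest (P := fun k => π k ≤ u (j+1)) (hsucc j hj).1
      (show π (kk j + 1) ≤ u (j+1) from (hsucc j hj).2.1)
  set v : ℕ → ℝ := fun j => π (kk j) with hv_def
  have hv0 : v 0 = a := by simp [hv_def, hkk0, hπ0]
  have hvm : v m = b := by simp [hv_def, hkkm, hπn]
  have hvu : ∀ j, v j ≤ u j := fun j => hku_le j
  have huv : ∀ j < m, u j ≤ v (j+1) := by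
    intro j hj
    exact le_trans (le_of_lt (hsucc j hj).2.2)
      (hmono (hkk_strict j hj) (hkk_le_n (j+1)))
  have hvdiff : ∀ j < m, v (j+1) - v j ≤ 2*h := by
    intro j hj
    have h1 : u j - h < v j := by
      have h2 := (hsucc j hj).2.2
      have h3 := hmesh (kk j) (hsucc j hj).1
      simp only [hv_def]
      linarith
    have h4 : v (j+1) ≤ u (j+1) := hvu (j+1)
    have h5 := hustep j
    linarith
  have hvmono : ∀ j, v j ≤ v (j+1) := fun j =>
    hmono (hkk_mono (Nat.le_succ j)) (hkk_le_n (j+1))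
  have hvmem : ∀ j, a ≤ v j ∧ v j ≤ b := fun j => hπmem (kk j) (hkk_le_n j)
  have humem : ∀ j, j ≤ m → u j ≤ b := fun j hj => le_trans (humono hj) (le_of_eq hum)
  set f : ℕ → E := fun k => Ξ (π k) (π (k+1)) with hf_def
  have hsplit : ∀ j, j ≤ m → (∑ p ∈ Finset.range j, ∑ k ∈ Finset.Ico (kk p) (kk (p+1)), f k)
      = ∑ k ∈ Finset.Ico 0 (kk j), f k := by
    intro j
    induction j with
    | zero => intro _; simp [hkk0]
    | succ p ih =>
      intro hp
      rw [Finset.sum_range_succ, ih (by omega)]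
      exact Finset.sum_Ico_consecutive f
        (by rw [← hkk0]; exact hkk_mono (Nat.zero_le p)) (hkk_mono (Nat.le_succ p))
  have htotal : (∑ k ∈ Finset.range n, f k)
      = ∑ p ∈ Finset.range m, ∑ k ∈ Finset.Ico (kk p) (kk (p+1)), f k := by
    rw [hsplit m le_rfl, hkkm, ← Finset.range_eq_Ico]
  have h4h : (0:ℝ) ≤ 4*h := by linarith
  have hblock : ∀ j, j < m → ‖(∑ k ∈ Finset.Ico (kk j) (kk (j+1)), f k) - Ξ (v j) (v (j+1))‖
      ≤ C * Kθ θ * (4*h) ^ θ := by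
    intro j hj
    have hle : kk j ≤ kk (j+1) := hkk_mono (Nat.le_succ j)
    have hrw : (∑ k ∈ Finset.Ico (kk j) (kk (j+1)), f k)
        = ∑ k ∈ Finset.range (kk (j+1) - kk j), Ξ (π (kk j + k)) (π (kk j + k + 1)) := by
      rw [Finset.sum_Ico_eq_sum_range]
    have hres := removal' hC hθ Hδ (kk (j+1) - kk j) (fun k => π (kk j + k))
      (fun k hk => hstr (kk j + k) (by
        have := hkk_le_n (j+1); omega))
      (by simpa using (hvmem j).1)
      (by
        have : kk j + (kk (j+1) - kk j) = kk (j+1) := by omega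
        simpa [this] using (hπmem (kk (j+1)) (hkk_le_n (j+1))).2)
    have heq : kk j + (kk (j+1) - kk j) = kk (j+1) := by omega
    simp only [heq, Nat.add_zero] at hres
    rw [hrw]
    refine hres.trans ?_
    rw [Kθ]
    apply mul_le_mul_of_nonneg_left _ (mul_nonneg hC (Kθ_nonneg θ))
    apply Real.rpow_le_rpow
    · have := hvmono j; simp only [hv_def] at this ⊢; linarith
    · have := hvdiff j hj; simp only [hv_def] at this ⊢; linarith
    · linarith
  -- goal sum is Σ Ξ (u j) (u (j+1))
  have hgoal : (∑ j ∈ Finset.range m, Ξ (a + (j:ℝ)*((b-a)/(m:ℝ))) (a + ((j:ℝ)+1)*((b-a)/(m:ℝ))))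
      = ∑ j ∈ Finset.range m, Ξ (u j) (u (j+1)) := by
    apply Finset.sum_congr rfl; intro j _
    have e1 : a + (j:ℝ)*((b-a)/(m:ℝ)) = u j := by simp [hu_def, hh_def]
    have e2 : a + ((j:ℝ)+1)*((b-a)/(m:ℝ)) = u (j+1) := by
      simp only [hu_def, hh_def]; push_cast; ring
    rw [e1, e2]
  rw [hgoal, htotal]
  set X1 : E := ∑ j ∈ Finset.range m,
    ((∑ k ∈ Finset.Ico (kk j) (kk (j+1)), f k) - Ξ (v j) (v (j+1))) with hX1
  set X2 : E := ∑ j ∈ Finset.range m, (Ξ (v j) (u j) - Ξ (v (j+1)) (u (j+1))) with hX2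
  set X3 : E := ∑ j ∈ Finset.range m,
    (Ξ (v j) (v (j+1)) - Ξ (v j) (u j) - Ξ (u j) (v (j+1))) with hX3
  set X4 : E := ∑ j ∈ Finset.range m,
    (Ξ (u j) (u (j+1)) - Ξ (u j) (v (j+1)) - Ξ (v (j+1)) (u (j+1))) with hX4
  have key : (∑ p ∈ Finset.range m, ∑ k ∈ Finset.Ico (kk p) (kk (p+1)), f k)
      - (∑ j ∈ Finset.range m, Ξ (u j) (u (j+1))) = X1 + X2 + X3 - X4 := by
    rw [hX1, hX2, hX3, hX4, ← Finset.sum_add_distrib, ← Finset.sum_add_distrib,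
      ← Finset.sum_sub_distrib, ← Finset.sum_sub_distrib]
    apply Finset.sum_congr rfl
    intro j _
    abel
  have hX2zero : X2 = 0 := by
    rw [hX2, Finset.sum_range_sub' (fun j => Ξ (v j) (u j)) m, hv0, hu0, hvm, hum,
      diag_zero (lt_trans one_pos hθ) Hδ le_rfl (le_of_lt hab),
      diag_zero (lt_trans one_pos hθ) Hδ (le_of_lt hab) le_rfl, sub_zero]
  have hX1bound : ‖X1‖ ≤ (m:ℝ) * (C * Kθ θ * (4*h) ^ θ) := by
    rw [hX1]
    refine (norm_sum_le _ _).trans ?_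
    have := Finset.sum_le_card_nsmul (Finset.range m)
      (fun j => ‖(∑ k ∈ Finset.Ico (kk j) (kk (j+1)), f k) - Ξ (v j) (v (j+1))‖)
      (C * Kθ θ * (4*h) ^ θ) (fun j hj => hblock j (Finset.mem_range.mp hj))
    simpa [nsmul_eq_mul] using this
  have hX3bound : ‖X3‖ ≤ (m:ℝ) * (C * (4*h) ^ θ) := by
    rw [hX3]
    refine (norm_sum_le _ _).trans ?_
    have hb3 : ∀ j ∈ Finset.range m,
        ‖Ξ (v j) (v (j+1)) - Ξ (v j) (u j) - Ξ (u j) (v (j+1))‖ ≤ C * (4*h) ^ θ := by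
      intro j hj'
      have hj := Finset.mem_range.mp hj'
      have h1 := Hδ (v j) (u j) (v (j+1)) (hvmem j).1 (hvu j) (huv j hj) (hvmem (j+1)).2
      refine h1.trans ?_
      apply mul_le_mul_of_nonneg_left _ hC
      apply Real.rpow_le_rpow
      · have := le_trans (hvu j) (huv j hj); linarith
      · have := hvdiff j hj; linarith
      · linarith
    have := Finset.sum_le_card_nsmul (Finset.range m)
      (fun j => ‖Ξ (v j) (v (j+1)) - Ξ (v j) (u j) - Ξ (u j) (v (j+1))‖)
      (C * (4*h) ^ θ) hb3
    simpa [nsmul_eq_mul] using this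
  have hX4bound : ‖X4‖ ≤ (m:ℝ) * (C * (4*h) ^ θ) := by
    rw [hX4]
    refine (norm_sum_le _ _).trans ?_
    have hb4 : ∀ j ∈ Finset.range m,
        ‖Ξ (u j) (u (j+1)) - Ξ (u j) (v (j+1)) - Ξ (v (j+1)) (u (j+1))‖ ≤ C * (4*h) ^ θ := by
      intro j hj'
      have hj := Finset.mem_range.mp hj'
      have h1 := Hδ (u j) (v (j+1)) (u (j+1)) (hua j) (huv j hj) (hvu (j+1))
        (humem (j+1) hj)
      refine h1.trans ?_
      apply mul_le_mul_of_nonneg_left _ hC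
      apply Real.rpow_le_rpow
      · have := hustep j; have := humono (Nat.le_succ j); linarith
      · have := hustep j; linarith
      · linarith
    have := Finset.sum_le_card_nsmul (Finset.range m)
      (fun j => ‖Ξ (u j) (u (j+1)) - Ξ (u j) (v (j+1)) - Ξ (v (j+1)) (u (j+1))‖)
      (C * (4*h) ^ θ) hb4
    simpa [nsmul_eq_mul] using this
  calc ‖(∑ p ∈ Finset.range m, ∑ k ∈ Finset.Ico (kk p) (kk (p+1)), f k)
      - (∑ j ∈ Finset.range m, Ξ (u j) (u (j+1)))‖
      = ‖X1 + X3 - X4‖ := by rw [key, hX2zero]; congr 1; abel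
    _ ≤ ‖X1‖ + ‖X3‖ + ‖X4‖ := by
        refine (norm_sub_le _ _).trans ?_
        exact add_le_add_left (norm_add_le _ _) _
    _ ≤ (m:ℝ) * (C * Kθ θ * (4*h) ^ θ) + (m:ℝ) * (C * (4*h) ^ θ) + (m:ℝ) * (C * (4*h) ^ θ) :=
        add_le_add (add_le_add hX1bound hX3bound) hX4bound
    _ = C * (Kθ θ + 2) * m * (4*h) ^ θ := by ring

theorem sewing {E : Type*} [NormedAddCommGroup E] [CompleteSpace E]
    {a b C θ : ℝ} {Ξ : ℝ → ℝ → E} (hab : a < b) (hC : 0 ≤ C) (hθ : 1 < θ)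
    (Hδ : ∀ s u t : ℝ, a ≤ s → s ≤ u → u ≤ t → t ≤ b → ‖Ξ s t - Ξ s u - Ξ u t‖ ≤ C * (t-s) ^ θ) :
    ∃ I : E, RSConv a b Ξ I := by
  set S : ℕ → E := fun m =>
    ∑ j ∈ Finset.range m, Ξ (a + (j:ℝ)*((b-a)/m)) (a + ((j:ℝ)+1)*((b-a)/m)) with hS
  set A : ℕ → ℝ := fun m => C * (Kθ θ + 2) * m * (4*((b-a)/m)) ^ θ with hA
  have hcomp : ∀ (m : ℕ), 1 ≤ m → ∀ (n : ℕ) (π : ℕ → ℝ), π 0 = a → π n = b →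
      (∀ k < n, π k < π (k+1)) → (∀ k < n, π (k+1) - π k ≤ (b-a)/m) →
      ‖(∑ k ∈ Finset.range n, Ξ (π k) (π (k+1))) - S m‖ ≤ A m := by
    intro m hm n π h0 hn hstr hmesh
    exact compare_uniform hab hC hθ Hδ m hm n π h0 hn hstr hmesh
  have huni : ∀ m m' : ℕ, 1 ≤ m → m ≤ m' → ‖S m' - S m‖ ≤ A m := by
    intro m m' hm hmm'
    have hm' : 1 ≤ m' := le_trans hm hmm'
    have hm0 : (0:ℝ) < m := by exact_mod_cast hm
    have hm'0 : (0:ℝ) < m' := by exact_mod_cast hm'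
    have hd : (0:ℝ) < (b-a)/m' := div_pos (by linarith) hm'0
    have hrw : S m' = ∑ k ∈ Finset.range m',
        Ξ ((fun k : ℕ => a + (k:ℝ)*((b-a)/m')) k) ((fun k : ℕ => a + (k:ℝ)*((b-a)/m')) (k+1)) := by
      apply Finset.sum_congr rfl; intro k _
      congr 2
      push_cast; ring
    rw [hrw]
    apply hcomp m hm m' (fun k : ℕ => a + (k:ℝ)*((b-a)/m'))
    · simp
    · field_simp; ring
    · intro k _
      have : ((k:ℝ)+1)*((b-a)/m') = (k:ℝ)*((b-a)/m') + (b-a)/m' := by ring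
      push_cast
      nlinarith
    · intro k _
      have e : ((k:ℝ)+1)*((b-a)/m') - (k:ℝ)*((b-a)/m') = (b-a)/m' := by ring
      have hle : (b-a)/m' ≤ (b-a)/m :=
        div_le_div_of_nonneg_left (by linarith) hm0 (by exact_mod_cast hmm')
      push_cast
      linarith [hle, e]
  -- A m = c0 * m^(1-θ)
  set c0 : ℝ := C * (Kθ θ + 2) * (4*(b-a)) ^ θ with hc0
  have hAeq : ∀ m : ℕ, 1 ≤ m → A m = c0 * (m:ℝ) ^ (1-θ) := by
    intro m hm
    have hm0 : (0:ℝ) < m := by exact_mod_cast hm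
    have e1 : 4*((b-a)/m) = (4*(b-a)) * ((m:ℝ))⁻¹ := by field_simp
    have e2 : ((4*(b-a)) * ((m:ℝ))⁻¹) ^ θ = (4*(b-a)) ^ θ * ((m:ℝ))⁻¹ ^ θ :=
      Real.mul_rpow (by linarith) (by positivity)
    have e3 : ((m:ℝ))⁻¹ ^ θ = (m:ℝ) ^ (-θ) := by
      rw [Real.inv_rpow (le_of_lt hm0), ← Real.rpow_neg (le_of_lt hm0)]
    have e4 : (m:ℝ) * (m:ℝ) ^ (-θ) = (m:ℝ) ^ (1-θ) := by
      nth_rewrite 1 [← Real.rpow_one (m:ℝ)]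
      rw [← Real.rpow_add hm0]
      ring_nf
    simp only [hA, hc0, e1, e2, e3]
    rw [show C * (Kθ θ + 2) * (m:ℝ) * ((4*(b-a)) ^ θ * (m:ℝ) ^ (-θ))
        = C * (Kθ θ + 2) * (4*(b-a)) ^ θ * ((m:ℝ) * (m:ℝ) ^ (-θ)) by ring, e4]
  have hA0 : Filter.Tendsto A Filter.atTop (nhds 0) := by
    have h1 : Filter.Tendsto (fun x : ℝ => x ^ (-(θ-1))) Filter.atTop (nhds 0) :=
      tendsto_rpow_neg_atTop (by linarith)
    have h2 : Filter.Tendsto (fun m : ℕ => ((m:ℝ)) ^ (1-θ)) Filter.atTop (nhds 0) := by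
      have := h1.comp (tendsto_natCast_atTop_atTop (R := ℝ))
      simpa [Function.comp_def, show -(θ-1) = 1-θ by ring] using this
    have h3 : Filter.Tendsto (fun m : ℕ => c0 * ((m:ℝ)) ^ (1-θ)) Filter.atTop (nhds 0) := by
      simpa using h2.const_mul c0
    apply h3.congr'
    filter_upwards [Filter.eventually_ge_atTop 1] with m hm
    exact (hAeq m hm).symm
  -- Cauchy sequence
  have hcauchy : CauchySeq (fun N : ℕ => S (N+1)) := by
    apply cauchySeq_of_le_tendsto_0 (fun N => 2 * A (N+1))
    · intro n m N hn hm
      have b1 := huni (N+1) (n+1) (by omega) (by omega)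
      have b2 := huni (N+1) (m+1) (by omega) (by omega)
      have : dist (S (n+1)) (S (m+1)) ≤ ‖S (n+1) - S (N+1)‖ + ‖S (m+1) - S (N+1)‖ := by
        rw [dist_eq_norm]
        have : S (n+1) - S (m+1) = (S (n+1) - S (N+1)) - (S (m+1) - S (N+1)) := by abel
        rw [this]
        exact norm_sub_le _ _
      linarith
    · have := (hA0.comp (Filter.tendsto_add_atTop_nat 1)).const_mul (2:ℝ)
      simpa [Function.comp] using this
  obtain ⟨I, hI⟩ := cauchySeq_tendsto_of_complete hcauchy
  refine ⟨I, ?_⟩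
  intro η hη
  have hSI : Filter.Tendsto (fun N : ℕ => ‖S (N+1) - I‖) Filter.atTop (nhds 0) :=
    (tendsto_iff_norm_sub_tendsto_zero.mp hI)
  have hev1 : ∀ᶠ N : ℕ in Filter.atTop, ‖S (N+1) - I‖ < η/2 := by
    have := hSI.eventually (gt_mem_nhds (by linarith : (0:ℝ) < η/2))
    exact this
  have hev2 : ∀ᶠ N : ℕ in Filter.atTop, A (N+1) < η/2 := by
    have := (hA0.comp (Filter.tendsto_add_atTop_nat 1)).eventually
      (gt_mem_nhds (by linarith : (0:ℝ) < η/2))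
    exact this
  obtain ⟨N, hN1, hN2⟩ := (hev1.and hev2).exists
  refine ⟨(b-a)/(N+1), div_pos (by linarith) (by positivity), ?_⟩
  intro n π h0 hn hstr hmesh
  have hb := hcomp (N+1) (by omega) n π h0 hn hstr (fun k hk => by
    have := hmesh k hk
    push_cast
    linarith [this])
  calc ‖(∑ k ∈ Finset.range n, Ξ (π k) (π (k + 1))) - I‖
      ≤ ‖(∑ k ∈ Finset.range n, Ξ (π k) (π (k + 1))) - S (N+1)‖ + ‖S (N+1) - I‖ := by
        have e : (∑ k ∈ Finset.range n, Ξ (π k) (π (k + 1))) - I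
            = ((∑ k ∈ Finset.range n, Ξ (π k) (π (k + 1))) - S (N+1)) + (S (N+1) - I) := by abel
        rw [e]; exact norm_add_le _ _
    _ < η/2 + η/2 := by
        apply add_lt_add_of_le_of_lt (le_trans hb (le_of_lt hN2)) hN1
    _ = η := by ring

section lemmas
variable {r d : ℕ}

lemma tens_apply (x y : EuclideanSpace ℝ (Fin r)) (p : Fin r × Fin r) :
    tens x y p = x p.1 * y p.2 := rfl

lemma pairSet_bound {E : Type*} [NormedAddCommGroup E] {β a b : ℝ} {F : ℝ → ℝ → E}
    (h : BddAbove (pairSet β a b F)) :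
    ∃ M : ℝ, 0 ≤ M ∧ ∀ s ∈ Set.Icc a b, ∀ t ∈ Set.Icc a b, s ≠ t → ‖F s t‖ ≤ M * |t-s| ^ β := by
  obtain ⟨M0, hM0⟩ := h
  refine ⟨max M0 0, le_max_right _ _, ?_⟩
  intro s hs t ht hst
  have hmem : ‖F s t‖ / |t-s| ^ β ∈ pairSet β a b F := ⟨s, t, hs, ht, rfl⟩
  have hub := hM0 hmem
  have hpos : 0 < |t-s| ^ β :=
    Real.rpow_pos_of_pos (abs_pos.mpr (sub_ne_zero.mpr (Ne.symm hst))) β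
  rw [div_le_iff₀ hpos] at hub
  calc ‖F s t‖ ≤ M0 * |t-s|^β := hub
    _ ≤ max M0 0 * |t-s|^β := mul_le_mul_of_nonneg_right (le_max_left _ _) hpos.le

lemma pairSet_bound' {E : Type*} [NormedAddCommGroup E] {β a b : ℝ} {F : ℝ → ℝ → E}
    (h : BddAbove (pairSet β a b F)) (hβ : 0 < β) (h0 : ∀ s ∈ Set.Icc a b, F s s = 0) :
    ∃ M : ℝ, 0 ≤ M ∧ ∀ s ∈ Set.Icc a b, ∀ t ∈ Set.Icc a b, ‖F s t‖ ≤ M * |t-s| ^ β := by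
  obtain ⟨M, hM, hbd⟩ := pairSet_bound h
  refine ⟨M, hM, ?_⟩
  intro s hs t ht
  rcases eq_or_ne s t with rfl | hst
  · rw [h0 s hs, norm_zero, sub_self, abs_zero, Real.zero_rpow (ne_of_gt hβ), mul_zero]
  · exact hbd s hs t ht hst

lemma euclid_coord_le (M : EuclideanSpace ℝ (Fin r × Fin r)) (p : Fin r × Fin r) :
    |M p| ≤ ‖M‖ := by
  rw [EuclideanSpace.norm_eq]
  have h1 : |M p| = Real.sqrt (‖M p‖^2) := by
    rw [Real.sqrt_sq_eq_abs]; simp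
  rw [h1]
  apply Real.sqrt_le_sqrt
  exact Finset.single_le_sum (f := fun q => ‖M q‖^2) (fun q _ => by positivity) (Finset.mem_univ p)

lemma norm_bapp_le (L : EuclideanSpace ℝ (Fin r) →L[ℝ] EuclideanSpace ℝ (Fin r) →L[ℝ] EuclideanSpace ℝ (Fin d))
    (M : EuclideanSpace ℝ (Fin r × Fin r)) :
    ‖bapp L M‖ ≤ ((r:ℝ)*(r:ℝ)) * ‖L‖ * ‖M‖ := by
  refine (norm_sum_le _ _).trans ?_
  have hterm : ∀ p : Fin r × Fin r,
      ‖M p • L (EuclideanSpace.single p.1 1) (EuclideanSpace.single p.2 1)‖ ≤ ‖L‖ * ‖M‖ := by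
    intro p
    rw [norm_smul]
    have h1 : ‖L (EuclideanSpace.single p.1 1) (EuclideanSpace.single p.2 1)‖ ≤ ‖L‖ := by
      calc ‖L (EuclideanSpace.single p.1 1) (EuclideanSpace.single p.2 1)‖
          ≤ ‖L (EuclideanSpace.single p.1 1)‖ * ‖(EuclideanSpace.single p.2 (1:ℝ))‖ :=
            (L _).le_opNorm _
        _ ≤ ‖L‖ * ‖(EuclideanSpace.single p.1 (1:ℝ))‖ * ‖(EuclideanSpace.single p.2 (1:ℝ))‖ :=
            mul_le_mul_of_nonneg_right (L.le_opNorm _) (norm_nonneg _)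
        _ = ‖L‖ := by rw [EuclideanSpace.norm_single, EuclideanSpace.norm_single]; simp
    calc ‖M p‖ * ‖L (EuclideanSpace.single p.1 1) (EuclideanSpace.single p.2 1)‖
        ≤ ‖M‖ * ‖L‖ := by
          apply mul_le_mul _ h1 (norm_nonneg _) (norm_nonneg _)
          simpa using euclid_coord_le M p
      _ = ‖L‖ * ‖M‖ := by ring
  calc (∑ p : Fin r × Fin r, ‖M p • L (EuclideanSpace.single p.1 1) (EuclideanSpace.single p.2 1)‖)
      ≤ ∑ p : Fin r × Fin r, ‖L‖ * ‖M‖ := Finset.sum_le_sum (fun p _ => hterm p)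
    _ = ((r:ℝ)*(r:ℝ)) * ‖L‖ * ‖M‖ := by
        rw [Finset.sum_const]
        simp [Finset.card_univ, nsmul_eq_mul]
        ring

lemma euclid_expand (x : EuclideanSpace ℝ (Fin r)) :
    x = ∑ i : Fin r, x i • EuclideanSpace.single i (1:ℝ) := by
  ext j
  rw [WithLp.ofLp_sum, Finset.sum_apply]
  simp [EuclideanSpace.single_apply]

lemma bapp_tens (L : EuclideanSpace ℝ (Fin r) →L[ℝ] EuclideanSpace ℝ (Fin r) →L[ℝ] EuclideanSpace ℝ (Fin d))
    (x y : EuclideanSpace ℝ (Fin r)) : bapp L (tens x y) = L x y := by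
  have key : L x y = ∑ i : Fin r, ∑ j : Fin r,
      (x i * y j) • L (EuclideanSpace.single i 1) (EuclideanSpace.single j 1) := by
    conv_lhs => rw [euclid_expand x]
    rw [map_sum, ContinuousLinearMap.sum_apply]
    apply Finset.sum_congr rfl; intro i _
    rw [_root_.map_smul, ContinuousLinearMap.smul_apply]
    conv_lhs => rw [euclid_expand y]
    rw [map_sum, Finset.smul_sum]
    apply Finset.sum_congr rfl; intro j _
    rw [_root_.map_smul, smul_smul]
  rw [key]
  unfold bapp
  rw [Fintype.sum_prod_type]
  apply Finset.sum_congr rfl; intro i _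
  apply Finset.sum_congr rfl; intro j _
  rw [tens_apply]

lemma bapp_add (L : EuclideanSpace ℝ (Fin r) →L[ℝ] EuclideanSpace ℝ (Fin r) →L[ℝ] EuclideanSpace ℝ (Fin d))
    (M N : EuclideanSpace ℝ (Fin r × Fin r)) : bapp L (M + N) = bapp L M + bapp L N := by
  unfold bapp
  rw [← Finset.sum_add_distrib]
  apply Finset.sum_congr rfl
  intro p _
  have : (M + N) p = M p + N p := rfl
  rw [this, add_smul]

lemma bapp_sub (L : EuclideanSpace ℝ (Fin r) →L[ℝ] EuclideanSpace ℝ (Fin r) →L[ℝ] EuclideanSpace ℝ (Fin d))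
    (M N : EuclideanSpace ℝ (Fin r × Fin r)) : bapp L (M - N) = bapp L M - bapp L N := by
  unfold bapp
  rw [← Finset.sum_sub_distrib]
  apply Finset.sum_congr rfl
  intro p _
  have : (M - N) p = M p - N p := rfl
  rw [this, sub_smul]

lemma bapp_sub_left (L L' : EuclideanSpace ℝ (Fin r) →L[ℝ] EuclideanSpace ℝ (Fin r) →L[ℝ] EuclideanSpace ℝ (Fin d))
    (M : EuclideanSpace ℝ (Fin r × Fin r)) : bapp (L - L') M = bapp L M - bapp L' M := by
  unfold bapp
  rw [← Finset.sum_sub_distrib]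
  apply Finset.sum_congr rfl
  intro p _
  rw [ContinuousLinearMap.sub_apply, ContinuousLinearMap.sub_apply, smul_sub]

lemma norm_tens (x y : EuclideanSpace ℝ (Fin r)) : ‖tens x y‖ = ‖x‖ * ‖y‖ := by
  rw [EuclideanSpace.norm_eq, EuclideanSpace.norm_eq, EuclideanSpace.norm_eq,
    ← Real.sqrt_mul (by positivity)]
  congr 1
  rw [Finset.sum_mul_sum, Fintype.sum_prod_type]
  apply Finset.sum_congr rfl
  intro i _
  apply Finset.sum_congr rfl
  intro j _
  rw [tens_apply]
  simp [abs_mul, mul_pow, sq_abs]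

lemma continuous_tens2 : Continuous
    (fun p : (EuclideanSpace ℝ (Fin r)) × (EuclideanSpace ℝ (Fin r)) => tens p.1 p.2) := by
  unfold tens
  apply Continuous.comp (PiLp.continuous_toLp 2 _)
  apply continuous_pi
  intro q
  have h1 : Continuous (fun p : (EuclideanSpace ℝ (Fin r)) × (EuclideanSpace ℝ (Fin r)) => p.1 q.1) :=
    (continuous_apply q.1).comp ((PiLp.continuous_ofLp 2 _).comp continuous_fst)
  have h2 : Continuous (fun p : (EuclideanSpace ℝ (Fin r)) × (EuclideanSpace ℝ (Fin r)) => p.2 q.2) :=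
    (continuous_apply q.2).comp ((PiLp.continuous_ofLp 2 _).comp continuous_snd)
  exact h1.mul h2

lemma ContinuousOn.tens {f g : ℝ → EuclideanSpace ℝ (Fin r)} {s : Set ℝ}
    (hf : ContinuousOn f s) (hg : ContinuousOn g s) :
    ContinuousOn (fun v => tens (f v) (g v)) s :=
  continuous_tens2.comp_continuousOn (hf.prodMk hg)

end lemmas

lemma continuousOn_of_holder {E : Type*} [NormedAddCommGroup E] {f : ℝ → E} {a b M β : ℝ}
    (hβ : 0 < β)
    (h : ∀ s ∈ Set.Icc a b, ∀ t ∈ Set.Icc a b, ‖f t - f s‖ ≤ M * |t - s| ^ β) :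
    ContinuousOn f (Set.Icc a b) := by
  intro x hx
  rw [Metric.continuousWithinAt_iff]
  intro ε hε
  set M' : ℝ := max M 0 + 1 with hM'
  have hM'pos : 0 < M' := by positivity
  refine ⟨(ε/M') ^ (1/β), Real.rpow_pos_of_pos (by positivity) _, ?_⟩
  intro y hy hdist
  have hb : ‖f y - f x‖ ≤ M' * |y - x| ^ β := by
    calc ‖f y - f x‖ ≤ M * |y - x| ^ β := h x hx y hy
      _ ≤ M' * |y - x| ^ β := by
          apply mul_le_mul_of_nonneg_right _ (Real.rpow_nonneg (abs_nonneg _) _)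
          simp only [hM']
          have := le_max_left M 0
          linarith
  rw [dist_eq_norm]
  rcases eq_or_ne y x with rfl | hne
  · simpa using hε
  · have habs : 0 < |y - x| := abs_pos.mpr (sub_ne_zero.mpr hne)
    have hlt : |y - x| ^ β < ((ε/M') ^ (1/β)) ^ β := by
      apply Real.rpow_lt_rpow (abs_nonneg _) _ hβ
      rw [Real.dist_eq] at hdist
      exact hdist
    have heq : ((ε/M') ^ (1/β)) ^ β = ε/M' := by
      rw [← Real.rpow_mul (by positivity), one_div_mul_cancel (ne_of_gt hβ), Real.rpow_one]
    calc ‖f y - f x‖ ≤ M' * |y - x| ^ β := hb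
      _ < M' * ((ε/M') ^ (1/β)) ^ β := by
          exact mul_lt_mul_of_pos_left hlt hM'pos
      _ = ε := by rw [heq]; field_simp

lemma Phi_continuous {r : ℕ} {ψ : ℝ → EuclideanSpace ℝ (Fin r)} (hψc : Continuous ψ) :
    Continuous (Phi ψ) :=
  intervalIntegral.continuous_primitive (fun a b => hψc.intervalIntegrable a b) 0

lemma Phi_sub {r : ℕ} {ψ : ℝ → EuclideanSpace ℝ (Fin r)} (hψc : Continuous ψ) (s t : ℝ) :
    Phi ψ t - Phi ψ s = ∫ u in s..t, ψ u :=
  intervalIntegral.integral_interval_sub_left (hψc.intervalIntegrable _ _)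
    (hψc.intervalIntegrable _ _)

lemma Phi_bound {r : ℕ} {ψ : ℝ → EuclideanSpace ℝ (Fin r)} (hψc : Continuous ψ)
    {T Mψ : ℝ} (hψ : ∀ u ∈ Set.Icc (0:ℝ) T, ‖ψ u‖ ≤ Mψ) (hT : 0 ≤ T)
    {s t : ℝ} (hs : s ∈ Set.Icc (0:ℝ) T) (ht : t ∈ Set.Icc (0:ℝ) T) :
    ‖Phi ψ t - Phi ψ s‖ ≤ Mψ * |t - s| := by
  rw [Phi_sub hψc]
  apply intervalIntegral.norm_integral_le_of_norm_le_const
  intro x hx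
  apply hψ
  have h1 : Set.uIoc s t ⊆ Set.uIcc s t := Set.Ioc_subset_Icc_self
  have h2 : Set.uIcc s t ⊆ Set.uIcc 0 T := Set.uIcc_subset_uIcc_iff_mem.mpr
    (by rw [Set.uIcc_of_le hT]; exact ⟨hs, ht⟩)
  rw [← Set.uIcc_of_le hT]
  exact h2 (h1 hx)


lemma tens_zero_left {r : ℕ} (y : EuclideanSpace ℝ (Fin r)) :
    tens (0 : EuclideanSpace ℝ (Fin r)) y = 0 := by
  ext p
  rw [tens_apply]
  simp

lemma rpow_prod_le {x y z β γ : ℝ} (hx : 0 ≤ x) (hxz : x ≤ z) (hy : 0 ≤ y) (hyz : y ≤ z)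
    (hβ : 0 < β) (hγ : 0 < γ) : x ^ β * y ^ γ ≤ z ^ (β + γ) := by
  rw [Real.rpow_add' (le_trans hx hxz) (by positivity)]
  exact mul_le_mul (Real.rpow_le_rpow hx hxz hβ.le) (Real.rpow_le_rpow hy hyz hγ.le)
    (Real.rpow_nonneg hy γ) (Real.rpow_nonneg (le_trans hx hxz) β)

lemma le_rpow_split {x T α : ℝ} (hx : 0 ≤ x) (hxT : x ≤ T) (hα : 0 < α) (hα1 : α ≤ 1) :
    x ≤ T ^ (1-α) * x ^ α := by
  have h1 : x = x ^ (1-α) * x ^ α := by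
    rw [← Real.rpow_add' hx (by rw [sub_add_cancel]; norm_num), sub_add_cancel, Real.rpow_one]
  calc x = x ^ (1-α) * x ^ α := h1
    _ ≤ T ^ (1-α) * x ^ α :=
      mul_le_mul_of_nonneg_right (Real.rpow_le_rpow hx hxT (by linarith))
        (Real.rpow_nonneg hx α)

set_option maxHeartbeats 2000000 in
/-- a path `(Z,Z')` controlled by `B` is also controlled by
the translated path `Y = Φ + B`, both rough integrals `∫₀ᵀ Z dB` (against
`(B,𝔹)`) and `∫₀ᵀ Z dY` (against `(Y,𝕐)`) exist as limits of compensated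
Riemann sums, and `∫₀ᵀ Z dY = ∫₀ᵀ Z ψ ds + ∫₀ᵀ Z dB`. -/
theorem statement9 (r d : ℕ) (T α : ℝ) (hT : 0 < T) (hα : α ∈ Set.Ioc (1/3 : ℝ) (1/2))
    (B : ℝ → EuclideanSpace ℝ (Fin r))
    (𝔹 : ℝ → ℝ → EuclideanSpace ℝ (Fin r × Fin r))
    (hB : BddAbove (pairSet α 0 T (incr B)))
    (h𝔹 : BddAbove (pairSet (2*α) 0 T 𝔹))
    (hChen : Chen T B 𝔹)
    (ψ : ℝ → EuclideanSpace ℝ (Fin r)) (hψc : Continuous ψ)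
    (Mψ : ℝ) (hψ : ∀ u ∈ Set.Icc (0:ℝ) T, ‖ψ u‖ ≤ Mψ)
    (Z : ℝ → (EuclideanSpace ℝ (Fin r) →L[ℝ] EuclideanSpace ℝ (Fin d)))
    (Z' : ℝ → (EuclideanSpace ℝ (Fin r) →L[ℝ]
        (EuclideanSpace ℝ (Fin r) →L[ℝ] EuclideanSpace ℝ (Fin d))))
    (hZ : BddAbove (pairSet α 0 T (incr Z)))
    (hZ' : BddAbove (pairSet α 0 T (incr Z')))
    (hRZ : BddAbove (pairSet (2*α) 0 T (fun s t => Z t - Z s - Z' s (B t - B s)))) :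
    BddAbove (pairSet (2*α) 0 T
      (fun s t => Z t - Z s - Z' s ((Phi ψ t + B t) - (Phi ψ s + B s)))) ∧
    ∃ IB IY : EuclideanSpace ℝ (Fin d),
      RSConv 0 T (fun u v => Z u (B v - B u) + bapp (Z' u) (𝔹 u v)) IB ∧
      RSConv 0 T (fun u v =>
        Z u ((Phi ψ v + B v) - (Phi ψ u + B u)) + bapp (Z' u) (YY 𝔹 ψ B u v)) IY ∧
      IY = (∫ s in (0:ℝ)..T, Z s (ψ s)) + IB := by
  obtain ⟨hα1, hα2⟩ := hα
  have hα0 : 0 < α := by linarith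
  have hT0 : (0:ℝ) ≤ T := hT.le
  have h2α : 0 < 2*α := by linarith
  -- Hölder constants
  obtain ⟨MB, hMB0, hMB⟩ := pairSet_bound' hB hα0
    (fun s _ => by simp only [incr, sub_self])
  have h𝔹diag : ∀ s ∈ Set.Icc (0:ℝ) T, 𝔹 s s = 0 := by
    intro s hs
    have h := hChen s hs s hs s hs
    have e : 𝔹 s s - 𝔹 s s - 𝔹 s s = -(𝔹 s s) := by abel
    rw [e, sub_self, tens_zero_left] at h
    simpa using congrArg Neg.neg h
  obtain ⟨M𝔹, hM𝔹0, hM𝔹⟩ := pairSet_bound' h𝔹 h2α h𝔹diag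
  obtain ⟨MZ, hMZ0, hMZ⟩ := pairSet_bound' hZ hα0 (fun s _ => by simp only [incr, sub_self])
  obtain ⟨MZ', hMZ'0, hMZ'⟩ := pairSet_bound' hZ' hα0 (fun s _ => by simp only [incr, sub_self])
  obtain ⟨MR, hMR0, hMR⟩ := pairSet_bound' hRZ h2α
    (fun s _ => by simp only [sub_self, map_zero, sub_zero])
  set Mψ' : ℝ := max Mψ 0 with hMψ'def
  have hMψ'0 : 0 ≤ Mψ' := le_max_right _ _
  have hψ' : ∀ u ∈ Set.Icc (0:ℝ) T, ‖ψ u‖ ≤ Mψ' := fun u hu =>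
    le_trans (hψ u hu) (le_max_left _ _)
  set NZ' : ℝ := ‖Z' 0‖ + MZ' * T ^ α with hNZ'def
  have hNZ'0 : 0 ≤ NZ' := by positivity
  have hNZ' : ∀ s ∈ Set.Icc (0:ℝ) T, ‖Z' s‖ ≤ NZ' := by
    intro s hs
    have h1 : ‖Z' s - Z' 0‖ ≤ MZ' * |s - 0| ^ α := by
      have := hMZ' 0 ⟨le_rfl, hT0⟩ s hs
      exact this
    have h2 : |s - 0| ^ α ≤ T ^ α := by
      apply Real.rpow_le_rpow (abs_nonneg _) _ hα0.le
      rw [sub_zero, abs_of_nonneg hs.1]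
      exact hs.2
    have h4 := norm_sub_norm_le (Z' s) (Z' 0)
    have h5 : MZ' * |s-0|^α ≤ MZ' * T^α := mul_le_mul_of_nonneg_left h2 hMZ'0
    simp only [hNZ'def]
    linarith
  have habsT : ∀ s ∈ Set.Icc (0:ℝ) T, ∀ t ∈ Set.Icc (0:ℝ) T, |t - s| ≤ T := by
    intro s hs t ht
    rw [abs_sub_le_iff]
    constructor <;> [linarith [hs.1, ht.2]; linarith [ht.1, hs.2]]
  constructor
  · -- Part (i): controlled by Y
    refine ⟨MR + NZ' * Mψ' * T ^ (1-2*α), ?_⟩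
    rintro x ⟨s, t, hs, ht, rfl⟩
    rcases eq_or_ne s t with rfl | hst
    · rw [sub_self, abs_zero, Real.zero_rpow (ne_of_gt h2α), div_zero]
      positivity
    · rw [div_le_iff₀ (Real.rpow_pos_of_pos (abs_pos.mpr (sub_ne_zero.mpr (Ne.symm hst))) _)]
      show ‖Z t - Z s - Z' s ((Phi ψ t + B t) - (Phi ψ s + B s))‖
        ≤ (MR + NZ' * Mψ' * T ^ (1-2*α)) * |t-s| ^ (2*α)
      have harg : (Phi ψ t + B t) - (Phi ψ s + B s) = (B t - B s) + (Phi ψ t - Phi ψ s) := by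
        abel
      have e : Z t - Z s - Z' s ((Phi ψ t + B t) - (Phi ψ s + B s))
          = (Z t - Z s - Z' s (B t - B s)) - Z' s (Phi ψ t - Phi ψ s) := by
        rw [harg, map_add]
        abel
      rw [e]
      have h1 : ‖Z t - Z s - Z' s (B t - B s)‖ ≤ MR * |t-s| ^ (2*α) := hMR s hs t ht
      have h2 : ‖Z' s (Phi ψ t - Phi ψ s)‖ ≤ NZ' * (Mψ' * |t - s|) := by
        calc ‖Z' s (Phi ψ t - Phi ψ s)‖ ≤ ‖Z' s‖ * ‖Phi ψ t - Phi ψ s‖ :=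
            (Z' s).le_opNorm _
          _ ≤ NZ' * (Mψ' * |t - s|) := by
            apply mul_le_mul (hNZ' s hs) (Phi_bound hψc hψ' hT0 hs ht) (norm_nonneg _) hNZ'0
      have h3 : |t-s| ≤ |t-s| ^ (2*α) * T ^ (1-2*α) := by
        have e1 : |t-s| = |t-s| ^ (2*α) * |t-s| ^ (1-2*α) := by
          rw [← Real.rpow_add' (abs_nonneg _) (by rw [add_sub_cancel]; norm_num)]
          rw [add_sub_cancel, Real.rpow_one]
        calc |t-s| = |t-s| ^ (2*α) * |t-s| ^ (1-2*α) := e1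
          _ ≤ |t-s| ^ (2*α) * T ^ (1-2*α) :=
            mul_le_mul_of_nonneg_left
              (Real.rpow_le_rpow (abs_nonneg _) (habsT s hs t ht) (by linarith))
              (Real.rpow_nonneg (abs_nonneg _) _)
      calc ‖(Z t - Z s - Z' s (B t - B s)) - Z' s (Phi ψ t - Phi ψ s)‖
          ≤ ‖Z t - Z s - Z' s (B t - B s)‖ + ‖Z' s (Phi ψ t - Phi ψ s)‖ := norm_sub_le _ _
        _ ≤ MR * |t-s| ^ (2*α) + NZ' * (Mψ' * |t-s|) := add_le_add h1 h2
        _ ≤ MR * |t-s| ^ (2*α) + NZ' * Mψ' * (|t-s| ^ (2*α) * T ^ (1-2*α)) := by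
            have := mul_le_mul_of_nonneg_left h3 (mul_nonneg hNZ'0 hMψ'0)
            nlinarith [this]
        _ = (MR + NZ' * Mψ' * T ^ (1-2*α)) * |t-s| ^ (2*α) := by ring
  -- Part (ii) and (iii)
  · set CB : ℝ := MR * MB + ((r:ℝ)*(r:ℝ)) * MZ' * M𝔹 with hCBdef
    have hCB0 : 0 ≤ CB := by positivity
    have h3α : 1 < 3*α := by linarith
    have hHδ : ∀ s u t : ℝ, 0 ≤ s → s ≤ u → u ≤ t → t ≤ T →
        ‖(Z s (B t - B s) + bapp (Z' s) (𝔹 s t))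
          - (Z s (B u - B s) + bapp (Z' s) (𝔹 s u))
          - (Z u (B t - B u) + bapp (Z' u) (𝔹 u t))‖ ≤ CB * (t-s) ^ (3*α) := by
      intro s u t h0s hsu hut htT
      have hs : s ∈ Set.Icc (0:ℝ) T := ⟨h0s, by linarith⟩
      have hu : u ∈ Set.Icc (0:ℝ) T := ⟨by linarith, by linarith⟩
      have ht : t ∈ Set.Icc (0:ℝ) T := ⟨by linarith, htT⟩
      have chen := hChen s hs u hu t ht
      have h1 : 𝔹 s t = 𝔹 s u + 𝔹 u t + tens (B u - B s) (B t - B u) := by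
        rw [← chen]; abel
      have h2 : Z s (B t - B s) - Z s (B u - B s) = Z s (B t - B u) := by
        rw [← map_sub]
        congr 1
        abel
      have hkey : (Z s (B t - B s) + bapp (Z' s) (𝔹 s t))
          - (Z s (B u - B s) + bapp (Z' s) (𝔹 s u))
          - (Z u (B t - B u) + bapp (Z' u) (𝔹 u t))
          = -((Z u - Z s - Z' s (B u - B s)) (B t - B u)) - (bapp (Z' u - Z' s) (𝔹 u t)) := by
        rw [h1, bapp_add, bapp_add, bapp_tens, bapp_sub_left]
        simp only [ContinuousLinearMap.sub_apply]
        rw [← h2]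
        abel
      rw [hkey]
      have hb1 : ‖(Z u - Z s - Z' s (B u - B s)) (B t - B u)‖ ≤ MR * MB * (t-s)^(3*α) := by
        calc ‖(Z u - Z s - Z' s (B u - B s)) (B t - B u)‖
            ≤ ‖Z u - Z s - Z' s (B u - B s)‖ * ‖B t - B u‖ :=
              (Z u - Z s - Z' s (B u - B s)).le_opNorm _
          _ ≤ (MR * |u-s|^(2*α)) * (MB * |t-u|^α) := by
              apply mul_le_mul (hMR s hs u hu) (hMB u hu t ht) (norm_nonneg _)
              positivity
          _ = MR * MB * (|u-s|^(2*α) * |t-u|^α) := by ring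
          _ ≤ MR * MB * (t-s)^(3*α) := by
              apply mul_le_mul_of_nonneg_left _ (by positivity)
              rw [abs_of_nonneg (by linarith : (0:ℝ) ≤ u - s),
                abs_of_nonneg (by linarith : (0:ℝ) ≤ t - u)]
              have := rpow_prod_le (x := u-s) (y := t-u) (z := t-s)
                (by linarith) (by linarith) (by linarith) (by linarith) h2α hα0
              calc (u-s)^(2*α) * (t-u)^α ≤ (t-s)^(2*α+α) := this
                _ = (t-s)^(3*α) := by norm_num; ring_nf
      have hb2 : ‖bapp (Z' u - Z' s) (𝔹 u t)‖
          ≤ ((r:ℝ)*(r:ℝ)) * MZ' * M𝔹 * (t-s)^(3*α) := by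
        calc ‖bapp (Z' u - Z' s) (𝔹 u t)‖
            ≤ ((r:ℝ)*(r:ℝ)) * ‖Z' u - Z' s‖ * ‖𝔹 u t‖ := norm_bapp_le _ _
          _ ≤ ((r:ℝ)*(r:ℝ)) * (MZ' * |u-s|^α) * (M𝔹 * |t-u|^(2*α)) := by
              apply mul_le_mul _ (hM𝔹 u hu t ht) (norm_nonneg _) (by positivity)
              exact mul_le_mul_of_nonneg_left (hMZ' s hs u hu) (by positivity)
          _ = ((r:ℝ)*(r:ℝ)) * MZ' * M𝔹 * (|u-s|^α * |t-u|^(2*α)) := by ring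
          _ ≤ ((r:ℝ)*(r:ℝ)) * MZ' * M𝔹 * (t-s)^(3*α) := by
              apply mul_le_mul_of_nonneg_left _ (by positivity)
              rw [abs_of_nonneg (by linarith : (0:ℝ) ≤ u - s),
                abs_of_nonneg (by linarith : (0:ℝ) ≤ t - u)]
              have := rpow_prod_le (x := u-s) (y := t-u) (z := t-s)
                (by linarith) (by linarith) (by linarith) (by linarith) hα0 h2α
              calc (u-s)^α * (t-u)^(2*α) ≤ (t-s)^(α+2*α) := this
                _ = (t-s)^(3*α) := by norm_num; ring_nf
      calc ‖-((Z u - Z s - Z' s (B u - B s)) (B t - B u)) - (bapp (Z' u - Z' s) (𝔹 u t))‖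
          ≤ ‖(Z u - Z s - Z' s (B u - B s)) (B t - B u)‖ + ‖bapp (Z' u - Z' s) (𝔹 u t)‖ := by
            refine (norm_sub_le _ _).trans ?_
            rw [norm_neg]
        _ ≤ MR * MB * (t-s)^(3*α) + ((r:ℝ)*(r:ℝ)) * MZ' * M𝔹 * (t-s)^(3*α) := add_le_add hb1 hb2
        _ = CB * (t-s)^(3*α) := by rw [hCBdef]; ring
    obtain ⟨IB, hIB⟩ := sewing (E := EuclideanSpace ℝ (Fin d)) hT hCB0 h3α hHδ
    -- continuity facts
    have hZcont : ContinuousOn Z (Set.Icc (0:ℝ) T) := continuousOn_of_holder hα0 hMZ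
    have hBcont : ContinuousOn B (Set.Icc (0:ℝ) T) := continuousOn_of_holder hα0 hMB
    have hZψc : ContinuousOn (fun s => Z s (ψ s)) (Set.Icc (0:ℝ) T) :=
      hZcont.clm_apply hψc.continuousOn
    set CG : ℝ := Mψ' * Mψ' * T^(1-α) + 3 * Mψ' * MB with hCGdef
    have hCG0 : 0 ≤ CG := by positivity
    have hGbound : ∀ u v : ℝ, u ∈ Set.Icc (0:ℝ) T → v ∈ Set.Icc (0:ℝ) T → u ≤ v →
        ‖YY 𝔹 ψ B u v - 𝔹 u v‖ ≤ CG * (v-u)^α * (v-u) := by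
      intro u v hu hv huv
      have hvu0 : (0:ℝ) ≤ v - u := by linarith
      have hvuT : v - u ≤ T := by
        have := hu.1; have := hv.2; linarith
      have hxmem : ∀ x ∈ Set.uIoc u v, u ≤ x ∧ x ≤ v ∧ x ∈ Set.Icc (0:ℝ) T := by
        intro x hx
        rw [Set.uIoc_of_le huv] at hx
        exact ⟨le_of_lt hx.1, hx.2, ⟨le_trans hu.1 (le_of_lt hx.1), le_trans hx.2 hv.2⟩⟩
      have hYYsub : YY 𝔹 ψ B u v - 𝔹 u v
          = (∫ w in u..v, tens ((Phi ψ w - Phi ψ u) + (B w - B u)) (ψ w))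
            + tens (Phi ψ v - Phi ψ u) (B v - B u)
            - ∫ w in u..v, tens (ψ w) (B w - B u) := by
        simp only [YY]
        abel
      rw [hYYsub]
      have hI1 : ‖∫ w in u..v, tens ((Phi ψ w - Phi ψ u) + (B w - B u)) (ψ w)‖
          ≤ ((Mψ' * (T^(1-α) * (v-u)^α) + MB * (v-u)^α) * Mψ') * (v-u) := by
        have := intervalIntegral.norm_integral_le_of_norm_le_const
          (C := (Mψ' * (T^(1-α) * (v-u)^α) + MB * (v-u)^α) * Mψ')
          (f := fun w => tens ((Phi ψ w - Phi ψ u) + (B w - B u)) (ψ w))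
          (a := u) (b := v) ?_
        · rwa [abs_of_nonneg hvu0] at this
        intro x hx
        obtain ⟨hux, hxv, hxT⟩ := hxmem x hx
        rw [norm_tens]
        have h1 : ‖Phi ψ x - Phi ψ u‖ ≤ Mψ' * (T^(1-α) * (v-u)^α) := by
          refine (Phi_bound hψc hψ' hT0 hu hxT).trans ?_
          apply mul_le_mul_of_nonneg_left _ hMψ'0
          rw [abs_of_nonneg (by linarith : (0:ℝ) ≤ x - u)]
          calc x - u ≤ T^(1-α) * (x-u)^α :=
                le_rpow_split (by linarith) (by linarith) hα0 (by linarith)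
            _ ≤ T^(1-α) * (v-u)^α := by
                apply mul_le_mul_of_nonneg_left _ (Real.rpow_nonneg hT0 _)
                exact Real.rpow_le_rpow (by linarith) (by linarith) hα0.le
        have h2 : ‖B x - B u‖ ≤ MB * (v-u)^α := by
          refine (hMB u hu x hxT).trans ?_
          apply mul_le_mul_of_nonneg_left _ hMB0
          rw [abs_of_nonneg (by linarith : (0:ℝ) ≤ x - u)]
          exact Real.rpow_le_rpow (by linarith) (by linarith) hα0.le
        apply mul_le_mul _ (hψ' x hxT) (norm_nonneg _)
        · positivity
        · exact (norm_add_le _ _).trans (add_le_add h1 h2)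
      have hT2 : ‖tens (Phi ψ v - Phi ψ u) (B v - B u)‖ ≤ (Mψ' * (v-u)) * (MB * (v-u)^α) := by
        rw [norm_tens]
        apply mul_le_mul _ _ (norm_nonneg _) (by positivity)
        · refine (Phi_bound hψc hψ' hT0 hu hv).trans ?_
          rw [abs_of_nonneg hvu0]
        · refine (hMB u hu v hv).trans ?_
          rw [abs_of_nonneg hvu0]
      have hI2 : ‖∫ w in u..v, tens (ψ w) (B w - B u)‖ ≤ (Mψ' * (MB * (v-u)^α)) * (v-u) := by
        have := intervalIntegral.norm_integral_le_of_norm_le_const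
          (C := Mψ' * (MB * (v-u)^α))
          (f := fun w => tens (ψ w) (B w - B u)) (a := u) (b := v) ?_
        · rwa [abs_of_nonneg hvu0] at this
        intro x hx
        obtain ⟨hux, hxv, hxT⟩ := hxmem x hx
        rw [norm_tens]
        apply mul_le_mul (hψ' x hxT) _ (norm_nonneg _) hMψ'0
        refine (hMB u hu x hxT).trans ?_
        apply mul_le_mul_of_nonneg_left _ hMB0
        rw [abs_of_nonneg (by linarith : (0:ℝ) ≤ x - u)]
        exact Real.rpow_le_rpow (by linarith) (by linarith) hα0.le
      calc ‖(∫ w in u..v, tens ((Phi ψ w - Phi ψ u) + (B w - B u)) (ψ w))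
            + tens (Phi ψ v - Phi ψ u) (B v - B u)
            - ∫ w in u..v, tens (ψ w) (B w - B u)‖
          ≤ ‖(∫ w in u..v, tens ((Phi ψ w - Phi ψ u) + (B w - B u)) (ψ w))
            + tens (Phi ψ v - Phi ψ u) (B v - B u)‖
            + ‖∫ w in u..v, tens (ψ w) (B w - B u)‖ := norm_sub_le _ _
        _ ≤ ‖∫ w in u..v, tens ((Phi ψ w - Phi ψ u) + (B w - B u)) (ψ w)‖
            + ‖tens (Phi ψ v - Phi ψ u) (B v - B u)‖
            + ‖∫ w in u..v, tens (ψ w) (B w - B u)‖ := by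
            have := norm_add_le (∫ w in u..v, tens ((Phi ψ w - Phi ψ u) + (B w - B u)) (ψ w))
              (tens (Phi ψ v - Phi ψ u) (B v - B u))
            linarith
        _ ≤ ((Mψ' * (T^(1-α) * (v-u)^α) + MB * (v-u)^α) * Mψ') * (v-u)
            + (Mψ' * (v-u)) * (MB * (v-u)^α)
            + (Mψ' * (MB * (v-u)^α)) * (v-u) := by
            have := add_le_add (add_le_add hI1 hT2) hI2
            linarith
        _ = CG * (v-u)^α * (v-u) := by rw [hCGdef]; ring
    refine ⟨IB, (∫ s in (0:ℝ)..T, Z s (ψ s)) + IB, hIB, ?_, rfl⟩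
    -- RSConv for the Y-sums
    intro η hη
    obtain ⟨δ1, hδ1pos, hδ1⟩ := hIB (η/3) (by linarith)
    set c23 : ℝ := MZ * Mψ' * T + ((r:ℝ)*(r:ℝ)) * NZ' * CG * T with hc23def
    have hc23nn : 0 ≤ c23 := by positivity
    set δ2 : ℝ := (η/(3*(c23+1))) ^ (1/α : ℝ) with hδ2def
    have hδ2pos : 0 < δ2 := Real.rpow_pos_of_pos (by positivity) _
    have hδ2key : c23 * δ2^α < η/3 := by
      have he : δ2^α = η/(3*(c23+1)) := by
        rw [hδ2def, ← Real.rpow_mul (by positivity), one_div_mul_cancel (ne_of_gt hα0),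
          Real.rpow_one]
      rw [he]
      have h1 : c23 * (η / (3*(c23+1))) < (c23+1) * (η/(3*(c23+1))) :=
        mul_lt_mul_of_pos_right (by linarith) (by positivity)
      have h2 : (c23+1) * (η/(3*(c23+1))) = η/3 := by field_simp
      linarith
    have hδ2α0 : 0 ≤ δ2^α := Real.rpow_nonneg hδ2pos.le _
    refine ⟨min δ1 δ2, lt_min hδ1pos hδ2pos, ?_⟩
    intro n π h0 hn hstr hmesh
    have hmesh1 : ∀ k < n, π (k+1) - π k < δ1 := fun k hk =>
      lt_of_lt_of_le (hmesh k hk) (min_le_left _ _)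
    have hmesh2 : ∀ k < n, π (k+1) - π k ≤ δ2 := fun k hk =>
      le_of_lt (lt_of_lt_of_le (hmesh k hk) (min_le_right _ _))
    have hπle : ∀ k l, k ≤ l → l ≤ n → π k ≤ π l := fun k l h h' => part_mono hstr h h'
    have hπmem : ∀ k, k ≤ n → π k ∈ Set.Icc (0:ℝ) T := by
      intro k hk
      constructor
      · rw [← h0]; exact hπle 0 k (Nat.zero_le k) hk
      · rw [← hn]; exact hπle k n hk le_rfl
    have hterm : ∀ u v : ℝ,
        Z u ((Phi ψ v + B v) - (Phi ψ u + B u)) + bapp (Z' u) (YY 𝔹 ψ B u v)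
        = (Z u (B v - B u) + bapp (Z' u) (𝔹 u v)) + Z u (Phi ψ v - Phi ψ u)
          + bapp (Z' u) (YY 𝔹 ψ B u v - 𝔹 u v) := by
      intro u v
      have harg : (Phi ψ v + B v) - (Phi ψ u + B u) = (B v - B u) + (Phi ψ v - Phi ψ u) := by
        abel
      rw [harg, map_add, bapp_sub]
      abel
    have hsum_eq : (∑ k ∈ Finset.range n,
        (Z (π k) ((Phi ψ (π (k+1)) + B (π (k+1))) - (Phi ψ (π k) + B (π k)))
          + bapp (Z' (π k)) (YY 𝔹 ψ B (π k) (π (k+1)))))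
        = (∑ k ∈ Finset.range n,
            (Z (π k) (B (π (k+1)) - B (π k)) + bapp (Z' (π k)) (𝔹 (π k) (π (k+1)))))
          + (∑ k ∈ Finset.range n, Z (π k) (Phi ψ (π (k+1)) - Phi ψ (π k)))
          + (∑ k ∈ Finset.range n,
              bapp (Z' (π k)) (YY 𝔹 ψ B (π k) (π (k+1)) - 𝔹 (π k) (π (k+1)))) := by
      rw [← Finset.sum_add_distrib, ← Finset.sum_add_distrib]
      exact Finset.sum_congr rfl (fun k _ => hterm (π k) (π (k+1)))
    have ht1 : ‖(∑ k ∈ Finset.range n,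
        (Z (π k) (B (π (k+1)) - B (π k)) + bapp (Z' (π k)) (𝔹 (π k) (π (k+1))))) - IB‖ < η/3 :=
      hδ1 n π h0 hn hstr hmesh1
    have hintk : ∀ k < n,
        IntervalIntegrable (fun s => Z s (ψ s)) MeasureTheory.volume (π k) (π (k+1)) := by
      intro k hk
      apply ContinuousOn.intervalIntegrable
      apply hZψc.mono
      rw [Set.uIcc_of_le (le_of_lt (hstr k hk))]
      intro x hx
      exact ⟨le_trans (hπmem k (le_of_lt hk)).1 hx.1, le_trans hx.2 (hπmem (k+1) hk).2⟩
    have hsplit : (∫ s in (0:ℝ)..T, Z s (ψ s))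
        = ∑ k ∈ Finset.range n, ∫ s in (π k)..(π (k+1)), Z s (ψ s) := by
      rw [intervalIntegral.sum_integral_adjacent_intervals hintk, h0, hn]
    have hsumT : ∑ k ∈ Finset.range n, (π (k+1) - π k) = T := by
      rw [Finset.sum_range_sub π n, h0, hn, sub_zero]
    have ht2 : ‖(∑ k ∈ Finset.range n, Z (π k) (Phi ψ (π (k+1)) - Phi ψ (π k)))
        - (∫ s in (0:ℝ)..T, Z s (ψ s))‖ ≤ MZ * Mψ' * T * δ2^α := by
      rw [hsplit, ← Finset.sum_sub_distrib]
      refine (norm_sum_le _ _).trans ?_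
      have hperk : ∀ k ∈ Finset.range n,
          ‖Z (π k) (Phi ψ (π (k+1)) - Phi ψ (π k)) - ∫ s in (π k)..(π (k+1)), Z s (ψ s)‖
          ≤ (MZ * Mψ' * δ2^α) * (π (k+1) - π k) := by
        intro k hk'
        have hk := Finset.mem_range.mp hk'
        have huv := le_of_lt (hstr k hk)
        have e1 : Z (π k) (Phi ψ (π (k+1)) - Phi ψ (π k))
            = ∫ s in (π k)..(π (k+1)), Z (π k) (ψ s) := by
          rw [Phi_sub hψc,
            ContinuousLinearMap.intervalIntegral_comp_comm _ (hψc.intervalIntegrable _ _)]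
        have hint1 : IntervalIntegrable (fun s => Z (π k) (ψ s))
            MeasureTheory.volume (π k) (π (k+1)) :=
          ((Z (π k)).continuous.comp hψc).intervalIntegrable _ _
        rw [e1, ← intervalIntegral.integral_sub hint1 (hintk k hk)]
        have hbd := intervalIntegral.norm_integral_le_of_norm_le_const
          (C := MZ * Mψ' * δ2^α) (f := fun s => Z (π k) (ψ s) - Z s (ψ s))
          (a := π k) (b := π (k+1)) ?_
        · rwa [abs_of_nonneg (by linarith : (0:ℝ) ≤ π (k+1) - π k)] at hbd
        intro x hx
        rw [Set.uIoc_of_le huv] at hx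
        have hxT : x ∈ Set.Icc (0:ℝ) T :=
          ⟨le_trans (hπmem k (le_of_lt hk)).1 (le_of_lt hx.1),
            le_trans hx.2 (hπmem (k+1) hk).2⟩
        have e2 : Z (π k) (ψ x) - Z x (ψ x) = (Z (π k) - Z x) (ψ x) := by
          rw [ContinuousLinearMap.sub_apply]
        show ‖Z (π k) (ψ x) - Z x (ψ x)‖ ≤ MZ * Mψ' * δ2^α
        rw [e2]
        have hZd : ‖Z (π k) - Z x‖ ≤ MZ * δ2^α := by
          refine (hMZ x hxT (π k) (hπmem k (le_of_lt hk))).trans ?_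
          apply mul_le_mul_of_nonneg_left _ hMZ0
          have hx1 := hx.1
          have hx2 := hx.2
          have habs : |π k - x| = x - π k := by
            rw [abs_sub_comm, abs_of_nonneg (by linarith : (0:ℝ) ≤ x - π k)]
          rw [habs]
          apply Real.rpow_le_rpow (by linarith) _ hα0.le
          have := hmesh2 k hk
          linarith
        calc ‖(Z (π k) - Z x) (ψ x)‖ ≤ ‖Z (π k) - Z x‖ * ‖ψ x‖ :=
            (Z (π k) - Z x).le_opNorm _
          _ ≤ (MZ * δ2^α) * Mψ' := mul_le_mul hZd (hψ' x hxT) (norm_nonneg _) (by positivity)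
          _ = MZ * Mψ' * δ2^α := by ring
      calc (∑ k ∈ Finset.range n,
            ‖Z (π k) (Phi ψ (π (k+1)) - Phi ψ (π k)) - ∫ s in (π k)..(π (k+1)), Z s (ψ s)‖)
          ≤ ∑ k ∈ Finset.range n, (MZ * Mψ' * δ2^α) * (π (k+1) - π k) :=
            Finset.sum_le_sum hperk
        _ = (MZ * Mψ' * δ2^α) * T := by rw [← Finset.mul_sum, hsumT]
        _ = MZ * Mψ' * T * δ2^α := by ring
    have ht3 : ‖∑ k ∈ Finset.range n,
        bapp (Z' (π k)) (YY 𝔹 ψ B (π k) (π (k+1)) - 𝔹 (π k) (π (k+1)))‖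
        ≤ ((r:ℝ)*(r:ℝ)) * NZ' * CG * T * δ2^α := by
      refine (norm_sum_le _ _).trans ?_
      have hperk : ∀ k ∈ Finset.range n,
          ‖bapp (Z' (π k)) (YY 𝔹 ψ B (π k) (π (k+1)) - 𝔹 (π k) (π (k+1)))‖
          ≤ (((r:ℝ)*(r:ℝ)) * NZ' * CG * δ2^α) * (π (k+1) - π k) := by
        intro k hk'
        have hk := Finset.mem_range.mp hk'
        have huv := le_of_lt (hstr k hk)
        have hΔ0 : (0:ℝ) ≤ π (k+1) - π k := by linarith
        have hG := hGbound (π k) (π (k+1)) (hπmem k (le_of_lt hk)) (hπmem (k+1) hk) huv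
        have hGd : ‖YY 𝔹 ψ B (π k) (π (k+1)) - 𝔹 (π k) (π (k+1))‖
            ≤ CG * δ2^α * (π (k+1) - π k) := by
          refine hG.trans ?_
          apply mul_le_mul_of_nonneg_right _ hΔ0
          apply mul_le_mul_of_nonneg_left _ hCG0
          exact Real.rpow_le_rpow hΔ0 (hmesh2 k hk) hα0.le
        calc ‖bapp (Z' (π k)) (YY 𝔹 ψ B (π k) (π (k+1)) - 𝔹 (π k) (π (k+1)))‖
            ≤ ((r:ℝ)*(r:ℝ)) * ‖Z' (π k)‖ * ‖YY 𝔹 ψ B (π k) (π (k+1)) - 𝔹 (π k) (π (k+1))‖ :=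
              norm_bapp_le _ _
          _ ≤ ((r:ℝ)*(r:ℝ)) * NZ' * (CG * δ2^α * (π (k+1) - π k)) := by
              apply mul_le_mul _ hGd (norm_nonneg _) (by positivity)
              exact mul_le_mul_of_nonneg_left (hNZ' (π k) (hπmem k (le_of_lt hk)))
                (by positivity)
          _ = (((r:ℝ)*(r:ℝ)) * NZ' * CG * δ2^α) * (π (k+1) - π k) := by ring
      calc (∑ k ∈ Finset.range n,
            ‖bapp (Z' (π k)) (YY 𝔹 ψ B (π k) (π (k+1)) - 𝔹 (π k) (π (k+1)))‖)
          ≤ ∑ k ∈ Finset.range n, (((r:ℝ)*(r:ℝ)) * NZ' * CG * δ2^α) * (π (k+1) - π k) :=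
            Finset.sum_le_sum hperk
        _ = (((r:ℝ)*(r:ℝ)) * NZ' * CG * δ2^α) * T := by rw [← Finset.mul_sum, hsumT]
        _ = ((r:ℝ)*(r:ℝ)) * NZ' * CG * T * δ2^α := by ring
    have hc23sum : MZ * Mψ' * T * δ2^α + ((r:ℝ)*(r:ℝ)) * NZ' * CG * T * δ2^α = c23 * δ2^α := by
      rw [hc23def]; ring
    calc ‖(∑ k ∈ Finset.range n,
          (Z (π k) ((Phi ψ (π (k+1)) + B (π (k+1))) - (Phi ψ (π k) + B (π k)))
            + bapp (Z' (π k)) (YY 𝔹 ψ B (π k) (π (k+1)))))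
          - ((∫ s in (0:ℝ)..T, Z s (ψ s)) + IB)‖
        = ‖((∑ k ∈ Finset.range n,
            (Z (π k) (B (π (k+1)) - B (π k)) + bapp (Z' (π k)) (𝔹 (π k) (π (k+1))))) - IB)
            + ((∑ k ∈ Finset.range n, Z (π k) (Phi ψ (π (k+1)) - Phi ψ (π k)))
              - (∫ s in (0:ℝ)..T, Z s (ψ s)))
            + (∑ k ∈ Finset.range n,
                bapp (Z' (π k)) (YY 𝔹 ψ B (π k) (π (k+1)) - 𝔹 (π k) (π (k+1))))‖ := by
          rw [hsum_eq]; congr 1; abel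
      _ ≤ ‖(∑ k ∈ Finset.range n,
            (Z (π k) (B (π (k+1)) - B (π k)) + bapp (Z' (π k)) (𝔹 (π k) (π (k+1))))) - IB‖
            + ‖(∑ k ∈ Finset.range n, Z (π k) (Phi ψ (π (k+1)) - Phi ψ (π k)))
              - (∫ s in (0:ℝ)..T, Z s (ψ s))‖
            + ‖∑ k ∈ Finset.range n,
                bapp (Z' (π k)) (YY 𝔹 ψ B (π k) (π (k+1)) - 𝔹 (π k) (π (k+1)))‖ := by
          refine (norm_add_le _ _).trans ?_
          have := norm_add_le ((∑ k ∈ Finset.range n,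
            (Z (π k) (B (π (k+1)) - B (π k)) + bapp (Z' (π k)) (𝔹 (π k) (π (k+1))))) - IB)
            ((∑ k ∈ Finset.range n, Z (π k) (Phi ψ (π (k+1)) - Phi ψ (π k)))
              - (∫ s in (0:ℝ)..T, Z s (ψ s)))
          linarith
      _ < η := by
          have hsum23 := add_le_add ht2 ht3
          rw [hc23sum] at hsum23
          linarith
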